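/- Let {X_k} be i.i.d. with P(X₁>u)>0 for all u>0 and lim_{u→∞} P(X₁>u+a)/P(X₁>u)=0 for some a>0. Let Z = Σ_{k=1}^N X_k with N ~ Poisson(λ) independent of the X_k, and define G(u) = Σ_{k=2}^∞ λ^k P(S_{k−1}>u)/k!. Then for every b>0, lim_{u→∞} G(u)/P(Z>u+b) = 0. -/

import Mathlib

open MeasureTheory ProbabilityTheory Filter Finset


set_option linter.unusedSectionVars false
set_option maxHeartbeats 1000000

namespace LG

variable {Ω : Type*} [MeasurableSpace Ω] (μ : Measure Ω) [IsProbabilityMeasure μ]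
  (X : ℕ → Ω → ℝ)
noncomputable def pt (n : ℕ) (u : ℝ) : ℝ :=
  (μ {ω | ∑ i ∈ range n, X i ω > u}).toReal

lemma meas_sum (hXmeas : ∀ k, Measurable (X k)) (n : ℕ) :
    Measurable (fun ω => ∑ i ∈ range n, X i ω) :=
  Finset.measurable_sum _ (fun i _ => hXmeas i)

lemma pt_nonneg (n : ℕ) (u : ℝ) : 0 ≤ pt μ X n u := ENNReal.toReal_nonneg

lemma pt_le_one (n : ℕ) (u : ℝ) : pt μ X n u ≤ 1 := by
  have h := prob_le_one (μ := μ) (s := {ω | ∑ i ∈ range n, X i ω > u})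
  simpa [pt] using ENNReal.toReal_mono (by simp) h

lemma pt_one (u : ℝ) : pt μ X 1 u = (μ {ω | X 0 ω > u}).toReal := by
  have : {ω | ∑ i ∈ range 1, X i ω > u} = {ω | X 0 ω > u} := by
    ext ω; simp [Finset.sum_range_one]
  rw [pt, this]


-- K1 : p_{m+1}(v) ≥ q(t) * p_m(v - t)
lemma K1 (hXmeas : ∀ k, Measurable (X k))
    (hXindep : iIndepFun X μ)
    (hXid : ∀ k, Measure.map (X k) μ = Measure.map (X 0) μ)
    (m : ℕ) (t v : ℝ) :
    (μ {ω | X 0 ω > t}).toReal * pt μ X m (v - t) ≤ pt μ X (m + 1) v := by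
  classical
  set S : Ω → ℝ := fun ω => ∑ i ∈ range m, X i ω with hS
  have hSmeas : Measurable S := meas_sum X hXmeas m
  have hI : IndepFun S (X m) μ := by
    have h := hXindep.indepFun_sum_range_succ hXmeas m
    have : (∑ j ∈ range m, X j) = S := by
      funext ω; simp [hS, Finset.sum_apply]
    rwa [this] at h
  have hsub : (S ⁻¹' (Set.Ioi (v - t))) ∩ ((X m) ⁻¹' (Set.Ioi t)) ⊆
      {ω | ∑ i ∈ range (m + 1), X i ω > v} := by
    intro ω hω
    obtain ⟨h1, h2⟩ := hω
    simp only [Set.mem_preimage, Set.mem_Ioi] at h1 h2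
    simp only [Set.mem_setOf_eq, Finset.sum_range_succ]
    have : (v - t) + t < S ω + X m ω := add_lt_add h1 h2
    simpa using lt_of_le_of_lt (by linarith) this
  have hmul : μ ((S ⁻¹' (Set.Ioi (v - t))) ∩ ((X m) ⁻¹' (Set.Ioi t)))
      = μ (S ⁻¹' (Set.Ioi (v - t))) * μ ((X m) ⁻¹' (Set.Ioi t)) :=
    hI.measure_inter_preimage_eq_mul _ _ measurableSet_Ioi measurableSet_Ioi
  have hXm : μ ((X m) ⁻¹' (Set.Ioi t)) = μ {ω | X 0 ω > t} := by
    rw [← Measure.map_apply (hXmeas m) measurableSet_Ioi, hXid m,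
      Measure.map_apply (hXmeas 0) measurableSet_Ioi]
    rfl
  have hfin : μ {ω | ∑ i ∈ range (m+1), X i ω > v} ≠ ⊤ := measure_ne_top _ _
  have hle : μ (S ⁻¹' (Set.Ioi (v - t))) * μ ((X m) ⁻¹' (Set.Ioi t))
      ≤ μ {ω | ∑ i ∈ range (m + 1), X i ω > v} := by
    rw [← hmul]; exact measure_mono hsub
  rw [hXm] at hle
  have := ENNReal.toReal_mono hfin hle
  rw [ENNReal.toReal_mul] at this
  have hpre : μ (S ⁻¹' (Set.Ioi (v - t))) = μ {ω | ∑ i ∈ range m, X i ω > v - t} := rfl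
  rw [hpre] at this
  calc (μ {ω | X 0 ω > t}).toReal * pt μ X m (v - t)
      = (μ {ω | ∑ i ∈ range m, X i ω > v - t}).toReal * (μ {ω | X 0 ω > t}).toReal := by
        rw [mul_comm]; rfl
    _ ≤ pt μ X (m+1) v := this

-- K2 : p_{m+1}(v+a) ≤ p_m(v-u₀) + ε p_{m+1}(v)
lemma K2 (hXmeas : ∀ k, Measurable (X k))
    (hXindep : iIndepFun X μ)
    (hXid : ∀ k, Measure.map (X k) μ = Measure.map (X 0) μ)
    (m : ℕ) (a ε u₀ : ℝ) (hε : 0 ≤ ε)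
    (h : ∀ w : ℝ, u₀ ≤ w →
      (μ {ω | X 0 ω > w + a}).toReal ≤ ε * (μ {ω | X 0 ω > w}).toReal)
    (v : ℝ) :
    (μ {ω | ∑ i ∈ range (m+1), X i ω > v + a}).toReal ≤
      (μ {ω | ∑ i ∈ range m, X i ω > v - u₀}).toReal
        + ε * (μ {ω | ∑ i ∈ range (m+1), X i ω > v}).toReal := by
  classical
  set S : Ω → ℝ := fun ω => ∑ i ∈ range m, X i ω with hSdef
  have hSmeas : Measurable S := Finset.measurable_sum _ (fun i _ => hXmeas i)
  have hYmeas : Measurable (X m) := hXmeas m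
  have hI : IndepFun S (X m) μ := by
    have h := hXindep.indepFun_sum_range_succ hXmeas m
    have : (∑ j ∈ range m, X j) = S := by funext ω; simp [hSdef, Finset.sum_apply]
    rwa [this] at h
  have hmap : μ.map (fun ω => (S ω, X m ω)) = (μ.map S).prod (μ.map (X m)) :=
    (indepFun_iff_map_prod_eq_prod_map_map hSmeas.aemeasurable hYmeas.aemeasurable).mp hI
  set c : ℝ := v - u₀ with hc
  -- the ENNReal tail hypothesis
  have hENN : ∀ w : ℝ, u₀ ≤ w →
      μ {ω | X 0 ω > w + a} ≤ ENNReal.ofReal ε * μ {ω | X 0 ω > w} := by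
    intro w hw
    have h1 := h w hw
    have e1 : μ {ω | X 0 ω > w + a} = ENNReal.ofReal ((μ {ω | X 0 ω > w + a}).toReal) :=
      (ENNReal.ofReal_toReal (measure_ne_top _ _)).symm
    have e2 : ENNReal.ofReal ε * μ {ω | X 0 ω > w}
        = ENNReal.ofReal (ε * (μ {ω | X 0 ω > w}).toReal) := by
      rw [ENNReal.ofReal_mul hε, ENNReal.ofReal_toReal (measure_ne_top _ _)]
    rw [e1, e2]
    exact ENNReal.ofReal_le_ofReal h1
  -- tail of X m in ENNReal, via map
  have hXmIoi : ∀ w : ℝ, (μ.map (X m)) (Set.Ioi w) = μ {ω | X 0 ω > w} := by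
    intro w
    rw [hXid m, Measure.map_apply (hXmeas 0) measurableSet_Ioi]
    rfl
  set T1 : Set (ℝ × ℝ) := {p | p.1 ≤ c ∧ p.1 + p.2 > v + a} with hT1
  set T0 : Set (ℝ × ℝ) := {p | p.1 + p.2 > v} with hT0
  have hT1meas : MeasurableSet T1 := by
    apply MeasurableSet.inter
    · exact measurableSet_le measurable_fst measurable_const
    · exact measurableSet_lt measurable_const (measurable_fst.add measurable_snd)
  have hT0meas : MeasurableSet T0 :=
    measurableSet_lt measurable_const (measurable_fst.add measurable_snd)
  have hpair : Measurable (fun ω => (S ω, X m ω)) := hSmeas.prodMk hYmeas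
  -- key: μ (pair ∈ T1) ≤ ofReal ε * μ (pair ∈ T0)
  have hkey : μ ((fun ω => (S ω, X m ω)) ⁻¹' T1)
      ≤ ENNReal.ofReal ε * μ ((fun ω => (S ω, X m ω)) ⁻¹' T0) := by
    rw [← Measure.map_apply hpair hT1meas, ← Measure.map_apply hpair hT0meas, hmap,
      Measure.prod_apply hT1meas, Measure.prod_apply hT0meas]
    rw [← MeasureTheory.lintegral_const_mul' _ _ (by simp : ENNReal.ofReal ε ≠ ⊤)]
    apply lintegral_mono
    intro s
    dsimp only
    by_cases hs : s ≤ c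
    · have e1 : Prod.mk s ⁻¹' T1 = Set.Ioi (v + a - s) := by
        ext x; simp only [Set.mem_preimage, hT1, Set.mem_setOf_eq, Set.mem_Ioi]
        constructor
        · intro hx; linarith [hx.2]
        · intro hx; exact ⟨hs, by linarith⟩
      have e0 : Prod.mk s ⁻¹' T0 = Set.Ioi (v - s) := by
        ext x; simp only [Set.mem_preimage, hT0, Set.mem_setOf_eq, Set.mem_Ioi]
        constructor <;> intro hx <;> linarith
      rw [e1, e0, hXmIoi, hXmIoi]
      have hw : u₀ ≤ v - s := by simp only [hc] at hs; linarith
      have := hENN (v - s) hw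
      have harg : v - s + a = v + a - s := by ring
      rwa [harg] at this
    · have e1 : Prod.mk s ⁻¹' T1 = ∅ := by
        ext x; simp only [Set.mem_preimage, hT1, Set.mem_setOf_eq, Set.mem_empty_iff_false,
          iff_false, not_and]
        intro hx; exact absurd hx hs
      rw [e1]; simp
  -- decompose the event
  have hsplit : {ω | ∑ i ∈ range (m+1), X i ω > v + a} ⊆
      {ω | ∑ i ∈ range m, X i ω > v - u₀} ∪ ((fun ω => (S ω, X m ω)) ⁻¹' T1) := by
    intro ω hω
    simp only [Set.mem_setOf_eq, Finset.sum_range_succ] at hω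
    by_cases hS' : S ω > c
    · left; exact hS'
    · right
      simp only [Set.mem_preimage, hT1, Set.mem_setOf_eq]
      exact ⟨le_of_not_gt hS', by simpa [hSdef] using hω⟩
  have hT0sub : ((fun ω => (S ω, X m ω)) ⁻¹' T0) ⊆ {ω | ∑ i ∈ range (m+1), X i ω > v} := by
    intro ω hω
    simp only [Set.mem_preimage, hT0, Set.mem_setOf_eq] at hω
    simp only [Set.mem_setOf_eq, Finset.sum_range_succ]
    simpa [hSdef] using hω
  have hENNfinal : μ {ω | ∑ i ∈ range (m+1), X i ω > v + a} ≤
      μ {ω | ∑ i ∈ range m, X i ω > v - u₀}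
        + ENNReal.ofReal ε * μ {ω | ∑ i ∈ range (m+1), X i ω > v} := by
    calc μ {ω | ∑ i ∈ range (m+1), X i ω > v + a}
        ≤ μ ({ω | ∑ i ∈ range m, X i ω > v - u₀} ∪ ((fun ω => (S ω, X m ω)) ⁻¹' T1)) :=
          measure_mono hsplit
      _ ≤ μ {ω | ∑ i ∈ range m, X i ω > v - u₀} + μ ((fun ω => (S ω, X m ω)) ⁻¹' T1) :=
          measure_union_le _ _
      _ ≤ μ {ω | ∑ i ∈ range m, X i ω > v - u₀}
            + ENNReal.ofReal ε * μ ((fun ω => (S ω, X m ω)) ⁻¹' T0) := by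
          exact add_le_add le_rfl hkey
      _ ≤ _ := by
          refine add_le_add le_rfl (mul_le_mul_right (measure_mono hT0sub) _)
  have hne : μ {ω | ∑ i ∈ range m, X i ω > v - u₀}
      + ENNReal.ofReal ε * μ {ω | ∑ i ∈ range (m+1), X i ω > v} ≠ ⊤ := by
    apply ENNReal.add_ne_top.mpr
    constructor
    · exact measure_ne_top _ _
    · exact ENNReal.mul_ne_top (by simp) (measure_ne_top _ _)
  have := ENNReal.toReal_mono hne hENNfinal
  rwa [ENNReal.toReal_add (measure_ne_top _ _)
    (ENNReal.mul_ne_top (by simp) (measure_ne_top _ _)), ENNReal.toReal_mul,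
    ENNReal.toReal_ofReal hε] at this

-- monotonicity of q
lemma q_mono (t t' : ℝ) (h : t ≤ t') :
    (μ {ω | X 0 ω > t'}).toReal ≤ (μ {ω | X 0 ω > t}).toReal := by
  apply ENNReal.toReal_mono (measure_ne_top _ _)
  apply measure_mono
  intro ω hω
  exact lt_of_le_of_lt h hω

lemma qpos (hpos : ∀ u : ℝ, 0 < u → 0 < (μ {ω | X 0 ω > u}).toReal) (t : ℝ) :
    0 < (μ {ω | X 0 ω > t}).toReal := by
  have h1 : (0:ℝ) < max t 1 := lt_of_lt_of_le one_pos (le_max_right _ _)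
  exact lt_of_lt_of_le (hpos _ h1) (q_mono μ X t (max t 1) (le_max_left _ _))

-- extraction from htail
lemma tail_eps (hpos : ∀ u : ℝ, 0 < u → 0 < (μ {ω | X 0 ω > u}).toReal)
    (a : ℝ)
    (htail : Tendsto (fun u : ℝ =>
        (μ {ω | X 0 ω > u + a}).toReal / (μ {ω | X 0 ω > u}).toReal) atTop (nhds 0))
    (ε : ℝ) (hε : 0 < ε) :
    ∃ u₀ : ℝ, 0 < u₀ ∧ ∀ w : ℝ, u₀ ≤ w →
      (μ {ω | X 0 ω > w + a}).toReal ≤ ε * (μ {ω | X 0 ω > w}).toReal := by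
  have h := (htail.eventually (eventually_le_nhds hε)).and (eventually_ge_atTop (1:ℝ))
  rw [eventually_atTop] at h
  obtain ⟨u₀, hu₀⟩ := h
  refine ⟨max u₀ 1, lt_of_lt_of_le one_pos (le_max_right _ _), fun w hw => ?_⟩
  have hw' : u₀ ≤ w := le_trans (le_max_left _ _) hw
  have h2 := (hu₀ w hw').1
  have hq : 0 < (μ {ω | X 0 ω > w}).toReal := qpos μ X hpos w
  calc (μ {ω | X 0 ω > w + a}).toReal
      = ((μ {ω | X 0 ω > w + a}).toReal / (μ {ω | X 0 ω > w}).toReal)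
          * (μ {ω | X 0 ω > w}).toReal := by field_simp
    _ ≤ ε * (μ {ω | X 0 ω > w}).toReal := by
        apply mul_le_mul_of_nonneg_right h2 (le_of_lt hq)


-- positivity of pt for n ≥ 1
lemma ppos (hXmeas : ∀ k, Measurable (X k))
    (hXindep : iIndepFun X μ)
    (hXid : ∀ k, Measure.map (X k) μ = Measure.map (X 0) μ)
    (hpos : ∀ u : ℝ, 0 < u → 0 < (μ {ω | X 0 ω > u}).toReal)
    (m : ℕ) (u : ℝ) : 0 < pt μ X (m + 1) u := by
  induction m generalizing u with
  | zero =>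
      rw [pt_one]
      exact qpos μ X hpos u
  | succ m ih =>
      have h1 := K1 μ X hXmeas hXindep hXid (m+1) 1 u
      have h2 : 0 < (μ {ω | X 0 ω > (1:ℝ)}).toReal * pt μ X (m+1) (u - 1) :=
        mul_pos (qpos μ X hpos 1) (ih (u - 1))
      exact lt_of_lt_of_le h2 h1

-- pt is antitone in u
lemma pt_anti (n : ℕ) {u v : ℝ} (h : u ≤ v) : pt μ X n v ≤ pt μ X n u := by
  apply ENNReal.toReal_mono (measure_ne_top _ _)
  apply measure_mono
  intro ω hω
  exact lt_of_le_of_lt h hω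

-- K3 : rapid variation of each convolution power
lemma K3 (hXmeas : ∀ k, Measurable (X k))
    (hXindep : iIndepFun X μ)
    (hXid : ∀ k, Measure.map (X k) μ = Measure.map (X 0) μ)
    (hpos : ∀ u : ℝ, 0 < u → 0 < (μ {ω | X 0 ω > u}).toReal)
    (a : ℝ) (ha : 0 < a)
    (htail : Tendsto (fun u : ℝ =>
        (μ {ω | X 0 ω > u + a}).toReal / (μ {ω | X 0 ω > u}).toReal) atTop (nhds 0))
    (m : ℕ) (δ : ℝ) (hδ : 0 < δ) :
    ∀ᶠ u in (atTop : Filter ℝ), pt μ X (m + 1) (u + a) ≤ δ * pt μ X (m + 1) u := by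
  induction m generalizing δ with
  | zero =>
      obtain ⟨u₀, hu₀pos, hu₀⟩ := tail_eps μ X hpos a htail δ hδ
      rw [eventually_atTop]
      refine ⟨u₀, fun u hu => ?_⟩
      rw [pt_one, pt_one]
      exact hu₀ u hu
  | succ m ih =>
      obtain ⟨u₀, hu₀pos, hu₀⟩ := tail_eps μ X hpos a htail (δ/2) (half_pos hδ)
      have hqpos : 0 < (μ {ω | X 0 ω > u₀ + a}).toReal := qpos μ X hpos _
      set δ' : ℝ := (δ/2) * (μ {ω | X 0 ω > u₀ + a}).toReal with hδ'def
      have hδ' : 0 < δ' := mul_pos (half_pos hδ) hqpos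
      obtain ⟨U, hU⟩ := eventually_atTop.mp (ih δ' hδ')
      rw [eventually_atTop]
      refine ⟨U + (u₀ + a), fun u hu => ?_⟩
      have hw : U ≤ u - u₀ - a := by linarith
      -- K2 with v := u
      have h2 := K2 μ X hXmeas hXindep hXid (m+1) a (δ/2) u₀ (le_of_lt (half_pos hδ))
        hu₀ u
      -- IH at u - u₀ - a
      have h3 := hU (u - u₀ - a) hw
      have harg : u - u₀ - a + a = u - u₀ := by ring
      rw [harg] at h3
      -- K1 : pt (m+2) u ≥ q(u₀+a) * pt (m+1) (u - (u₀+a))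
      have h4 := K1 μ X hXmeas hXindep hXid (m+1) (u₀ + a) u
      have harg2 : u - (u₀ + a) = u - u₀ - a := by ring
      rw [harg2] at h4
      have hptnn : 0 ≤ pt μ X (m+1) (u - u₀ - a) := pt_nonneg μ X _ _
      calc pt μ X (m + 1 + 1) (u + a)
          ≤ pt μ X (m+1) (u - u₀) + (δ/2) * pt μ X (m+1+1) u := by
            simpa [pt] using h2
        _ ≤ δ' * pt μ X (m+1) (u - u₀ - a) + (δ/2) * pt μ X (m+1+1) u := by
            exact add_le_add h3 le_rfl
        _ ≤ (δ/2) * pt μ X (m+1+1) u + (δ/2) * pt μ X (m+1+1) u := by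
            refine add_le_add ?_ le_rfl
            rw [hδ'def, mul_assoc]
            exact mul_le_mul_of_nonneg_left (by linarith [h4]) (le_of_lt (half_pos hδ))
        _ = δ * pt μ X (m+1+1) u := by ring

-- coefficients
noncomputable def dd (l : ℝ) (n : ℕ) : ℝ := Real.exp (-l) * l ^ n / (Nat.factorial n)

lemma dd_nonneg {l : ℝ} (hl : 0 < l) (n : ℕ) : 0 ≤ dd l n := by
  unfold dd; positivity

lemma dd_succ (l : ℝ) (n : ℕ) : dd l (n + 1) = dd l n * (l / (n + 1)) := by
  unfold dd
  rw [Nat.factorial_succ, pow_succ]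
  push_cast
  have h1 : ((Nat.factorial n : ℝ)) ≠ 0 := Nat.cast_ne_zero.mpr (Nat.factorial_ne_zero n)
  have h2 : ((n : ℝ) + 1) ≠ 0 := by positivity
  field_simp

lemma dd_summable {l : ℝ} : Summable (dd l) := by
  have h := Real.summable_pow_div_factorial l
  have : dd l = fun n => Real.exp (-l) * (l ^ n / (Nat.factorial n)) := by
    funext n; unfold dd; ring
  rw [this]
  exact h.mul_left _

variable (N : Ω → ℕ)

lemma Dterm (hXmeas : ∀ k, Measurable (X k))
    (hNindep : IndepFun N (fun ω => fun k => X k ω) μ)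
    (l : ℝ) (hl : 0 < l)
    (hN : ∀ n : ℕ, μ {ω | N ω = n}
        = ENNReal.ofReal (Real.exp (-l) * l ^ n / (Nat.factorial n)))
    (n : ℕ) (w : ℝ) :
    dd l n * pt μ X n w ≤ (μ {ω | ∑ i ∈ range (N ω), X i ω > w}).toReal := by
  classical
  set g : (ℕ → ℝ) → ℝ := fun f => ∑ i ∈ range n, f i with hg
  have hgmeas : Measurable g := Finset.measurable_sum _ (fun i _ => measurable_pi_apply i)
  have hI : IndepFun N (fun ω => g (fun k => X k ω)) μ :=
    hNindep.comp measurable_id hgmeas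
  have hinter : μ ((N ⁻¹' {n}) ∩ ((fun ω => g (fun k => X k ω)) ⁻¹' (Set.Ioi w)))
      = μ (N ⁻¹' {n}) * μ ((fun ω => g (fun k => X k ω)) ⁻¹' (Set.Ioi w)) :=
    hI.measure_inter_preimage_eq_mul _ _ (measurableSet_singleton n) measurableSet_Ioi
  have hsetA : N ⁻¹' ({n} : Set ℕ) = {ω | N ω = n} := rfl
  have hA : μ (N ⁻¹' {n}) = ENNReal.ofReal (dd l n) := by rw [hsetA]; exact hN n
  have hB : ((fun ω => g (fun k => X k ω)) ⁻¹' (Set.Ioi w))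
      = {ω | ∑ i ∈ range n, X i ω > w} := rfl
  have hsub : (N ⁻¹' {n}) ∩ ((fun ω => g (fun k => X k ω)) ⁻¹' (Set.Ioi w)) ⊆
      {ω | ∑ i ∈ range (N ω), X i ω > w} := by
    intro ω hω
    obtain ⟨h1, h2⟩ := hω
    have hNω : N ω = n := h1
    simp only [Set.mem_setOf_eq, hNω]
    exact h2
  have hle := measure_mono (μ := μ) hsub
  rw [hinter, hA, hB] at hle
  have := ENNReal.toReal_mono (measure_ne_top _ _) hle
  rwa [ENNReal.toReal_mul, ENNReal.toReal_ofReal (dd_nonneg hl n)] at this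

lemma Dtail (hXmeas : ∀ k, Measurable (X k))
    (hNmeas : Measurable N)
    (hNindep : IndepFun N (fun ω => fun k => X k ω) μ)
    (l : ℝ) (hl : 0 < l)
    (hN : ∀ n : ℕ, μ {ω | N ω = n}
        = ENNReal.ofReal (Real.exp (-l) * l ^ n / (Nat.factorial n)))
    (M : ℕ) (w : ℝ) :
    ∑' j : ℕ, dd l (j + M) * pt μ X (j + M) w
      ≤ (μ {ω | ∑ i ∈ range (N ω), X i ω > w}).toReal := by
  classical
  set E : ℕ → Set Ω := fun j =>
    (N ⁻¹' {j + M}) ∩ {ω | ∑ i ∈ range (j + M), X i ω > w} with hE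
  have hEmeas : ∀ j, MeasurableSet (E j) := by
    intro j
    exact (hNmeas (measurableSet_singleton _)).inter
      ((Finset.measurable_sum _ (fun i _ => hXmeas i)) measurableSet_Ioi)
  have hdisj : Pairwise (Function.onFun Disjoint E) := by
    intro i j hij
    rw [Function.onFun, Set.disjoint_left]
    rintro ω ⟨h1, _⟩ ⟨h2, _⟩
    have : i + M = j + M := by
      have e1 : N ω = i + M := h1
      have e2 : N ω = j + M := h2
      omega
    omega
  have hmuE : ∀ j, μ (E j) = ENNReal.ofReal (dd l (j + M))
      * μ {ω | ∑ i ∈ range (j + M), X i ω > w} := by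
    intro j
    set g : (ℕ → ℝ) → ℝ := fun f => ∑ i ∈ range (j + M), f i with hg
    have hgmeas : Measurable g := Finset.measurable_sum _ (fun i _ => measurable_pi_apply i)
    have hI : IndepFun N (fun ω => g (fun k => X k ω)) μ :=
      hNindep.comp measurable_id hgmeas
    have : E j = (N ⁻¹' {j + M}) ∩ ((fun ω => g (fun k => X k ω)) ⁻¹' (Set.Ioi w)) := rfl
    have hsetA : N ⁻¹' ({j + M} : Set ℕ) = {ω | N ω = j + M} := rfl
    rw [this, hI.measure_inter_preimage_eq_mul _ _ (measurableSet_singleton _)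
      measurableSet_Ioi, hsetA, hN (j + M)]
    rfl
  have hsub : (⋃ j, E j) ⊆ {ω | ∑ i ∈ range (N ω), X i ω > w} := by
    intro ω hω
    obtain ⟨j, hj⟩ := Set.mem_iUnion.mp hω
    obtain ⟨h1, h2⟩ := hj
    have hNω : N ω = j + M := h1
    simp only [Set.mem_setOf_eq, hNω]
    exact h2
  have hle : ∑' j, μ (E j) ≤ μ {ω | ∑ i ∈ range (N ω), X i ω > w} := by
    rw [← measure_iUnion hdisj hEmeas]
    exact measure_mono hsub
  have htr := ENNReal.toReal_mono (measure_ne_top _ _) hle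
  rw [ENNReal.tsum_toReal_eq (fun j => measure_ne_top μ (E j))] at htr
  refine le_trans (le_of_eq ?_) htr
  apply tsum_congr
  intro j
  rw [hmuE j, ENNReal.toReal_mul, ENNReal.toReal_ofReal (dd_nonneg hl _)]
  rfl

-- generic summability helper
lemma summable_ddpt {l : ℝ} (hl : 0 < l) (shift : ℕ) (n : ℕ → ℕ) (v : ℕ → ℝ) :
    Summable (fun j : ℕ => dd l (j + shift) * pt μ X (n j) (v j)) := by
  apply Summable.of_nonneg_of_le
    (fun j => mul_nonneg (dd_nonneg hl _) (pt_nonneg μ X _ _)) (fun j => ?_)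
    ((_root_.summable_nat_add_iff shift).mpr (dd_summable (l := l)))
  calc dd l (j + shift) * pt μ X (n j) (v j)
      ≤ dd l (j + shift) * 1 :=
        mul_le_mul_of_nonneg_left (pt_le_one μ X _ _) (dd_nonneg hl _)
    _ = dd l (j + shift) := mul_one _

lemma dd_pos {l : ℝ} (hl : 0 < l) (n : ℕ) : 0 < dd l n := by
  unfold dd
  have h1 : (0:ℝ) < Real.exp (-l) := Real.exp_pos _
  have h2 : (0:ℝ) < l ^ n := pow_pos hl n
  have h3 : (0:ℝ) < (Nat.factorial n : ℝ) := by
    exact_mod_cast Nat.factorial_pos n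
  positivity

end LG

theorem lemma_G
    {Ω : Type*} [MeasurableSpace Ω] (μ : Measure Ω) [IsProbabilityMeasure μ]
    (X : ℕ → Ω → ℝ) (N : Ω → ℕ)
    (hXmeas : ∀ k, Measurable (X k)) (hNmeas : Measurable N)
    (hXindep : iIndepFun X μ)
    (hXid : ∀ k, Measure.map (X k) μ = Measure.map (X 0) μ)
    (hNindep : IndepFun N (fun ω => fun k => X k ω) μ)
    (l : ℝ) (hl : 0 < l)
    (hN : ∀ n : ℕ, μ {ω | N ω = n}
        = ENNReal.ofReal (Real.exp (-l) * l ^ n / (Nat.factorial n)))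
    (hpos : ∀ u : ℝ, 0 < u → 0 < (μ {ω | X 0 ω > u}).toReal)
    (a : ℝ) (ha : 0 < a)
    (htail : Tendsto (fun u : ℝ =>
        (μ {ω | X 0 ω > u + a}).toReal / (μ {ω | X 0 ω > u}).toReal) atTop (nhds 0))
    (G : ℝ → ℝ)
    (hG : ∀ u : ℝ, G u = ∑' k : ℕ,
        l ^ (k + 2) * (μ {ω | ∑ i ∈ range (k + 1), X i ω > u}).toReal
          / (Nat.factorial (k + 2))) :
    ∀ b : ℝ, 0 < b →
      Tendsto (fun u : ℝ =>
          G u / (μ {ω | ∑ i ∈ range (N ω), X i ω > u + b}).toReal)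
        atTop (nhds 0) := by
  intro b hb
  set D : ℝ → ℝ := fun w => (μ {ω | ∑ i ∈ range (N ω), X i ω > w}).toReal with hDdef
  have hexp : Real.exp l * Real.exp (-l) = 1 := by
    rw [← Real.exp_add]; simp
  -- rewrite G in terms of dd and pt
  have hGr : ∀ u : ℝ, G u = Real.exp l * ∑' k : ℕ, LG.dd l (k+2) * LG.pt μ X (k+1) u := by
    intro u
    rw [hG u, ← tsum_mul_left]
    apply tsum_congr
    intro k
    simp only [LG.dd, LG.pt]
    rw [show Real.exp l * (Real.exp (-l) * l ^ (k + 2) / (Nat.factorial (k+2)) *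
          (μ {ω | ∑ i ∈ range (k + 1), X i ω > u}).toReal)
        = (Real.exp l * Real.exp (-l)) * (l ^ (k + 2) *
          (μ {ω | ∑ i ∈ range (k + 1), X i ω > u}).toReal / (Nat.factorial (k+2)))
      from by ring, hexp, one_mul]
  have Dpos : ∀ w : ℝ, 0 < D w := by
    intro w
    have h1 := LG.Dterm μ X N hXmeas hNindep l hl hN 1 w
    have h2 : 0 < LG.dd l 1 * LG.pt μ X 1 w := by
      apply mul_pos (LG.dd_pos hl 1)
      rw [LG.pt_one]
      exact LG.qpos μ X hpos w
    exact lt_of_lt_of_le h2 h1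
  -- the main quantitative bound
  have key : ∀ δ' : ℝ, 0 < δ' → ∀ᶠ u in (atTop : Filter ℝ),
      (∑' k : ℕ, LG.dd l (k+2) * LG.pt μ X (k+1) u) ≤ δ' * D (u + b) := by
    intro δ' hδ'
    set β : ℝ := (μ {ω | X 0 ω > a + b}).toReal with hβdef
    have hβpos : 0 < β := LG.qpos μ X hpos _
    set ε : ℝ := δ' * β / 4 with hεdef
    have hεpos : 0 < ε := by positivity
    obtain ⟨u₀, hu₀pos, hu₀⟩ := LG.tail_eps μ X hpos a htail ε hεpos
    set γ : ℝ := (μ {ω | X 0 ω > a + u₀ + b}).toReal with hγdef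
    have hγpos : 0 < γ := LG.qpos μ X hpos _
    obtain ⟨M₀, hM₀⟩ := exists_nat_ge (4 * l / (δ' * γ))
    set M : ℕ := M₀ + 1 with hMdef
    have hMpos : (0:ℝ) < (M:ℝ) := by positivity
    have hMbound : l / (((M:ℝ) + 2) * γ) ≤ δ' / 4 := by
      have h1 : 4 * l / (δ' * γ) ≤ (M:ℝ) + 2 := by
        push_cast [hMdef]
        linarith
      rw [div_le_div_iff₀ (by positivity) (by norm_num)]
      rw [div_le_iff₀ (by positivity)] at h1
      nlinarith [hγpos, hδ', hl]
    -- tail bound, valid for all u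
    have htails : ∀ u : ℝ,
        (∑' j : ℕ, LG.dd l (j + M + 2) * LG.pt μ X (j + M + 1) u)
          ≤ (δ'/2) * D (u + b) := by
      intro u
      have SumF : Summable (fun j : ℕ => LG.dd l (j + M + 2) * LG.pt μ X (j + M + 1) u) :=
        LG.summable_ddpt μ X hl (M+2) (fun j => j + M + 1) (fun _ => u)
      have SumA : Summable (fun j : ℕ =>
          LG.dd l (j + M + 2) * LG.pt μ X (j + M) (u - a - u₀)) :=
        LG.summable_ddpt μ X hl (M+2) (fun j => j + M) (fun _ => u - a - u₀)
      have SumB : Summable (fun j : ℕ =>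
          LG.dd l (j + M + 2) * LG.pt μ X (j + M + 1) (u - a)) :=
        LG.summable_ddpt μ X hl (M+2) (fun j => j + M + 1) (fun _ => u - a)
      have SumD1 : Summable (fun j : ℕ =>
          LG.dd l (j + M + 1) * LG.pt μ X (j + M + 1) (u + b)) :=
        LG.summable_ddpt μ X hl (M+1) (fun j => j + M + 1) (fun _ => u + b)
      have SumD2 : Summable (fun j : ℕ =>
          LG.dd l (j + M + 2) * LG.pt μ X (j + M + 2) (u + b)) :=
        LG.summable_ddpt μ X hl (M+2) (fun j => j + M + 2) (fun _ => u + b)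
      -- step 1: pointwise K2
      have step1 : ∀ j : ℕ, LG.dd l (j+M+2) * LG.pt μ X (j+M+1) u ≤
          LG.dd l (j+M+2) * LG.pt μ X (j+M) (u - a - u₀)
          + ε * (LG.dd l (j+M+2) * LG.pt μ X (j+M+1) (u - a)) := by
        intro j
        have h2 := LG.K2 μ X hXmeas hXindep hXid (j+M) a ε u₀ (le_of_lt hεpos) hu₀ (u - a)
        have h2' : LG.pt μ X (j+M+1) (u - a + a) ≤
            LG.pt μ X (j+M) (u - a - u₀) + ε * LG.pt μ X (j+M+1) (u - a) := by
          simpa [LG.pt] using h2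
        rw [show u - a + a = u from by ring] at h2'
        have h3 := mul_le_mul_of_nonneg_left h2' (LG.dd_nonneg hl (j+M+2))
        calc LG.dd l (j+M+2) * LG.pt μ X (j+M+1) u
            ≤ LG.dd l (j+M+2) * (LG.pt μ X (j+M) (u - a - u₀)
                + ε * LG.pt μ X (j+M+1) (u - a)) := h3
          _ = LG.dd l (j+M+2) * LG.pt μ X (j+M) (u - a - u₀)
                + ε * (LG.dd l (j+M+2) * LG.pt μ X (j+M+1) (u - a)) := by ring
      -- bound partial sums
      have hA : ∀ j : ℕ, LG.dd l (j+M+2) * LG.pt μ X (j+M) (u-a-u₀) ≤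
          (l / (((M:ℝ)+2) * γ)) * (LG.dd l (j+M+1) * LG.pt μ X (j+M+1) (u+b)) := by
        intro j
        have hk1 := LG.K1 μ X hXmeas hXindep hXid (j+M) (a + u₀ + b) (u + b)
        rw [show u + b - (a + u₀ + b) = u - a - u₀ from by ring] at hk1
        -- hk1 : γ * pt (j+M) (u-a-u₀) ≤ pt (j+M+1) (u+b)
        have hptA : LG.pt μ X (j+M) (u-a-u₀) ≤ LG.pt μ X (j+M+1) (u+b) / γ := by
          rw [le_div_iff₀ hγpos]
          calc LG.pt μ X (j+M) (u-a-u₀) * γ = γ * LG.pt μ X (j+M) (u-a-u₀) := by ring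
            _ ≤ LG.pt μ X (j+M+1) (u+b) := hk1
        have hdds : LG.dd l (j+M+2) = LG.dd l (j+M+1) * (l / ((j:ℝ)+M+2)) := by
          have := LG.dd_succ l (j+M+1)
          rw [this]
          push_cast
          ring_nf
        have hfrac : l / ((j:ℝ)+M+2) ≤ l / ((M:ℝ)+2) := by
          apply div_le_div_of_nonneg_left (le_of_lt hl) (by positivity)
          · push_cast; linarith [Nat.cast_nonneg (α := ℝ) j]
        calc LG.dd l (j+M+2) * LG.pt μ X (j+M) (u-a-u₀)
            = LG.dd l (j+M+1) * (l / ((j:ℝ)+M+2)) * LG.pt μ X (j+M) (u-a-u₀) := by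
              rw [← hdds]
          _ ≤ LG.dd l (j+M+1) * (l / ((M:ℝ)+2)) * (LG.pt μ X (j+M+1) (u+b) / γ) := by
              apply mul_le_mul
              · exact mul_le_mul_of_nonneg_left hfrac (LG.dd_nonneg hl _)
              · exact hptA
              · exact LG.pt_nonneg μ X _ _
              · exact mul_nonneg (LG.dd_nonneg hl _) (by positivity)
          _ = (l / (((M:ℝ)+2) * γ)) * (LG.dd l (j+M+1) * LG.pt μ X (j+M+1) (u+b)) := by
              rw [show l / (((M:ℝ)+2) * γ) = (l / ((M:ℝ)+2)) / γ from by rw [div_div]]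
              ring
      have hB : ∀ j : ℕ, LG.dd l (j+M+2) * LG.pt μ X (j+M+1) (u - a) ≤
          (1 / β) * (LG.dd l (j+M+2) * LG.pt μ X (j+M+2) (u+b)) := by
        intro j
        have hk1 := LG.K1 μ X hXmeas hXindep hXid (j+M+1) (a + b) (u + b)
        rw [show u + b - (a + b) = u - a from by ring] at hk1
        have hptB : LG.pt μ X (j+M+1) (u-a) ≤ LG.pt μ X (j+M+2) (u+b) / β := by
          rw [le_div_iff₀ hβpos]
          calc LG.pt μ X (j+M+1) (u-a) * β = β * LG.pt μ X (j+M+1) (u-a) := by ring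
            _ ≤ LG.pt μ X (j+M+2) (u+b) := hk1
        calc LG.dd l (j+M+2) * LG.pt μ X (j+M+1) (u - a)
            ≤ LG.dd l (j+M+2) * (LG.pt μ X (j+M+2) (u+b) / β) :=
              mul_le_mul_of_nonneg_left hptB (LG.dd_nonneg hl _)
          _ = (1 / β) * (LG.dd l (j+M+2) * LG.pt μ X (j+M+2) (u+b)) := by ring
      -- assemble
      have hDt1 : (∑' j : ℕ, LG.dd l (j + M + 1) * LG.pt μ X (j + M + 1) (u + b))
          ≤ D (u + b) :=
        LG.Dtail μ X N hXmeas hNmeas hNindep l hl hN (M+1) (u+b)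
      have hDt2 : (∑' j : ℕ, LG.dd l (j + M + 2) * LG.pt μ X (j + M + 2) (u + b))
          ≤ D (u + b) :=
        LG.Dtail μ X N hXmeas hNmeas hNindep l hl hN (M+2) (u+b)
      have hDnn : 0 ≤ D (u + b) := le_of_lt (Dpos (u+b))
      calc (∑' j : ℕ, LG.dd l (j + M + 2) * LG.pt μ X (j + M + 1) u)
          ≤ ∑' j : ℕ, (LG.dd l (j+M+2) * LG.pt μ X (j+M) (u - a - u₀)
              + ε * (LG.dd l (j+M+2) * LG.pt μ X (j+M+1) (u - a))) :=
            Summable.tsum_le_tsum step1 SumF (SumA.add (SumB.mul_left ε))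
        _ = (∑' j : ℕ, LG.dd l (j+M+2) * LG.pt μ X (j+M) (u - a - u₀))
              + ε * (∑' j : ℕ, LG.dd l (j+M+2) * LG.pt μ X (j+M+1) (u - a)) := by
            rw [Summable.tsum_add SumA (SumB.mul_left ε), tsum_mul_left]
        _ ≤ ((l / (((M:ℝ)+2) * γ))
              * (∑' j : ℕ, LG.dd l (j+M+1) * LG.pt μ X (j+M+1) (u + b)))
              + ε * ((1/β) * (∑' j : ℕ, LG.dd l (j+M+2) * LG.pt μ X (j+M+2) (u + b))) := by
            apply add_le_add
            · calc (∑' j : ℕ, LG.dd l (j+M+2) * LG.pt μ X (j+M) (u - a - u₀))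
                  ≤ ∑' j : ℕ, (l / (((M:ℝ)+2) * γ))
                      * (LG.dd l (j+M+1) * LG.pt μ X (j+M+1) (u+b)) :=
                    Summable.tsum_le_tsum hA SumA (SumD1.mul_left _)
                _ = _ := tsum_mul_left
            · apply mul_le_mul_of_nonneg_left _ (le_of_lt hεpos)
              calc (∑' j : ℕ, LG.dd l (j+M+2) * LG.pt μ X (j+M+1) (u - a))
                  ≤ ∑' j : ℕ, (1/β) * (LG.dd l (j+M+2) * LG.pt μ X (j+M+2) (u+b)) :=
                    Summable.tsum_le_tsum hB SumB (SumD2.mul_left _)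
                _ = _ := tsum_mul_left
        _ ≤ (δ'/4) * D (u+b) + (δ'/4) * D (u+b) := by
            apply add_le_add
            · apply mul_le_mul hMbound hDt1 ?_ (by linarith)
              · apply tsum_nonneg
                intro j
                exact mul_nonneg (LG.dd_nonneg hl _) (LG.pt_nonneg μ X _ _)
            · have hεβ : ε * (1/β) = δ' / 4 := by
                rw [hεdef]; field_simp
              calc ε * ((1/β) * (∑' j : ℕ, LG.dd l (j+M+2) * LG.pt μ X (j+M+2) (u + b)))
                  = (ε * (1/β)) * (∑' j : ℕ, LG.dd l (j+M+2) * LG.pt μ X (j+M+2) (u + b)) := by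
                    ring
                _ = (δ'/4) * (∑' j : ℕ, LG.dd l (j+M+2) * LG.pt μ X (j+M+2) (u + b)) := by
                    rw [hεβ]
                _ ≤ (δ'/4) * D (u+b) :=
                    mul_le_mul_of_nonneg_left hDt2 (by linarith)
        _ = (δ'/2) * D (u + b) := by ring
    -- head bound, eventually
    have hheads : ∀ᶠ u in (atTop : Filter ℝ), ∀ k ∈ range M,
        LG.dd l (k+2) * LG.pt μ X (k+1) u ≤ (δ'/(2*(M:ℝ))) * D (u+b) := by
      rw [eventually_all_finset]
      intro k _
      set η : ℝ := (δ'/(2*(M:ℝ))) * β with hηdef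
      have hηpos : 0 < η := by positivity
      have h3 := LG.K3 μ X hXmeas hXindep hXid hpos a ha htail k η hηpos
      obtain ⟨W, hW⟩ := eventually_atTop.mp h3
      refine eventually_atTop.mpr ⟨W + a, fun u hu => ?_⟩
      have h4 := hW (u - a) (by linarith)
      rw [show u - a + a = u from by ring] at h4
      have hk1 := LG.K1 μ X hXmeas hXindep hXid (k+1) (a+b) (u+b)
      rw [show u + b - (a + b) = u - a from by ring] at hk1
      have hD := LG.Dterm μ X N hXmeas hNindep l hl hN (k+2) (u+b)
      calc LG.dd l (k+2) * LG.pt μ X (k+1) u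
          ≤ LG.dd l (k+2) * (η * LG.pt μ X (k+1) (u-a)) :=
            mul_le_mul_of_nonneg_left h4 (LG.dd_nonneg hl _)
        _ = (δ'/(2*(M:ℝ))) * (LG.dd l (k+2) * (β * LG.pt μ X (k+1) (u-a))) := by
            rw [hηdef]; ring
        _ ≤ (δ'/(2*(M:ℝ))) * (LG.dd l (k+2) * LG.pt μ X (k+2) (u+b)) := by
            apply mul_le_mul_of_nonneg_left _ (by positivity)
            exact mul_le_mul_of_nonneg_left hk1 (LG.dd_nonneg hl _)
        _ ≤ (δ'/(2*(M:ℝ))) * D (u+b) := by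
            apply mul_le_mul_of_nonneg_left hD (by positivity)
    filter_upwards [hheads] with u hu
    have hsummable : Summable (fun k : ℕ => LG.dd l (k+2) * LG.pt μ X (k+1) u) :=
      LG.summable_ddpt μ X hl 2 (fun k => k + 1) (fun _ => u)
    rw [← Summable.sum_add_tsum_nat_add M hsummable]
    have hhead : (∑ k ∈ range M, LG.dd l (k+2) * LG.pt μ X (k+1) u)
        ≤ (δ'/2) * D (u+b) := by
      calc (∑ k ∈ range M, LG.dd l (k+2) * LG.pt μ X (k+1) u)
          ≤ ∑ _k ∈ range M, (δ'/(2*(M:ℝ))) * D (u+b) := Finset.sum_le_sum hu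
        _ = (M:ℝ) * ((δ'/(2*(M:ℝ))) * D (u+b)) := by
            rw [Finset.sum_const, card_range, nsmul_eq_mul]
        _ = (δ'/2) * D (u+b) := by
            field_simp
    have htail' := htails u
    calc (∑ k ∈ range M, LG.dd l (k+2) * LG.pt μ X (k+1) u)
          + (∑' j : ℕ, LG.dd l (j + M + 2) * LG.pt μ X (j + M + 1) u)
        ≤ (δ'/2) * D (u+b) + (δ'/2) * D (u+b) := add_le_add hhead htail'
      _ = δ' * D (u+b) := by ring
  -- conclude the limit
  rw [Metric.tendsto_atTop]
  intro ε₀ hε₀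
  have hkey := key ((ε₀/2) * Real.exp (-l)) (by positivity)
  obtain ⟨T, hT⟩ := eventually_atTop.mp hkey
  refine ⟨T, fun u hu => ?_⟩
  have h1 := hT u hu
  have hGnn : 0 ≤ G u := by
    rw [hG u]
    apply tsum_nonneg
    intro k
    positivity
  have hGle : G u ≤ (ε₀/2) * D (u+b) := by
    rw [hGr u]
    calc Real.exp l * (∑' k : ℕ, LG.dd l (k+2) * LG.pt μ X (k+1) u)
        ≤ Real.exp l * (((ε₀/2) * Real.exp (-l)) * D (u + b)) :=
          mul_le_mul_of_nonneg_left h1 (le_of_lt (Real.exp_pos l))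
      _ = (Real.exp l * Real.exp (-l)) * ((ε₀/2) * D (u+b)) := by ring
      _ = (ε₀/2) * D (u+b) := by rw [hexp, one_mul]
  have hDp := Dpos (u + b)
  rw [Real.dist_eq, sub_zero]
  have hratio : G u / D (u + b) ≤ ε₀ / 2 := by
    rw [div_le_iff₀ hDp]
    calc G u ≤ (ε₀/2) * D (u+b) := hGle
      _ = ε₀/2 * D (u+b) := rfl
  have habs : |G u / D (u + b)| = G u / D (u+b) :=
    abs_of_nonneg (div_nonneg hGnn (le_of_lt hDp))
  calc |G u / D (u + b)| = G u / D (u+b) := habs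
    _ ≤ ε₀/2 := hratio
    _ < ε₀ := by linarith
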